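/- Anti-tree asymptotics: Let p > 1, γ > 0, and let b be the anti-tree with sphere sizes #S_r ≍ r^γ for r ≥ 1 (in particular with #S_{r+1} = ⌈r^γ⌉ for r ≥ 1 and #S_1 = 1). Then: (i) ∂_bB_r(o) ≍ r^{2γ} for r ≥ 1; (ii) the p-Laplacian on the anti-tree is subcritical if and only if γ > (p-1)/2; (iii) if γ > (p-1)/2, then the minimal positive Green function satisfies G₀(z) ≍ |z|^{-(2γ-p+1)/(p-1)} for z ≠ o. -/

import Mathlib

open Real Filter

noncomputable section

attribute [local instance] Classical.propDecidable

/-- Signed power `a^⟨r⟩ = |a|^(r-1)·a`, with `0^⟨r⟩ = 0`. -/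
def spow (r a : ℝ) : ℝ := if a = 0 then 0 else |a| ^ (r - 1) * a

/-- `b` is a (weighted, row-summable) graph over `X`. -/
def IsGraph {X : Type*} (b : X → X → ℝ) : Prop :=
  (∀ x y, 0 ≤ b x y) ∧ (∀ x y, b x y = b y x) ∧ (∀ x, b x x = 0) ∧
    ∀ x, Summable fun y => b x y

/-- Connectedness: any two vertices are joined by a path of positive-weight edges. -/
def GraphConnected {X : Type*} (b : X → X → ℝ) : Prop :=
  ∀ x y, Relation.ReflTransGen (fun u v => 0 < b u v) x y

/-- Membership in `F_b(X)`. -/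
def inF {X : Type*} (p : ℝ) (b : X → X → ℝ) (f : X → ℝ) : Prop :=
  ∀ x, Summable fun y => b x y * |f x - f y| ^ (p - 1)

/-- The weighted `p`-Laplacian. -/
def pLap {X : Type*} (p : ℝ) (b : X → X → ℝ) (m : X → ℝ) (f : X → ℝ) (x : X) : ℝ :=
  (1 / m x) * ∑' y, b x y * spow (p - 1) (f x - f y)

/-- The quasilinear Schrödinger operator `H = Δ_p + V`. -/
def schrodOp {X : Type*} (p : ℝ) (b : X → X → ℝ) (m V : X → ℝ) (f : X → ℝ) (x : X) : ℝ :=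
  pLap p b m f x + V x * spow (p - 1) (f x)

/-- The energy functional `Q_{p,b,m,V}`. -/
def pEnergy {X : Type*} (p : ℝ) (b : X → X → ℝ) (m V : X → ℝ) (φ : X → ℝ) : ℝ :=
  (1 / 2) * (∑' z : X × X, b z.1 z.2 * |φ z.1 - φ z.2| ^ p)
    + ∑' x, m x * V x * |φ x| ^ p

/-- Positivity of `H`: existence of a positive `H`-superharmonic function. -/
def IsPositiveOp {X : Type*} (p : ℝ) (b : X → X → ℝ) (m V : X → ℝ) : Prop :=
  ∃ w : X → ℝ, inF p b w ∧ (∀ x, 0 ≤ w x) ∧ w ≠ 0 ∧ ∀ x, 0 ≤ schrodOp p b m V w x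

/-- Subcriticality of the energy functional. -/
def pSubcritical {X : Type*} (p : ℝ) (b : X → X → ℝ) (m V : X → ℝ) : Prop :=
  ∃ W : X → ℝ, (∀ x, 0 ≤ W x) ∧ W ≠ 0 ∧
    ∀ φ : X → ℝ, (Function.support φ).Finite →
      0 ≤ pEnergy p b m (fun x => V x - W x) φ

/-- Criticality: the energy functional is nonnegative but not subcritical. -/
def pCritical {X : Type*} (p : ℝ) (b : X → X → ℝ) (m V : X → ℝ) : Prop :=
  (∀ φ : X → ℝ, (Function.support φ).Finite → 0 ≤ pEnergy p b m V φ) ∧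
    ¬ pSubcritical p b m V

/-- `v` is an Agmon ground state: strictly positive, harmonic, and every positive
superharmonic function is a positive multiple of it. -/
def IsAgmonGroundState {X : Type*} (p : ℝ) (b : X → X → ℝ) (m V : X → ℝ)
    (v : X → ℝ) : Prop :=
  (∀ x, 0 < v x) ∧ inF p b v ∧ (∀ x, schrodOp p b m V v x = 0) ∧
    ∀ w : X → ℝ, inF p b w → (∀ x, 0 ≤ w x) → w ≠ 0 →
      (∀ x, 0 ≤ schrodOp p b m V w x) → ∃ c : ℝ, 0 < c ∧ ∀ x, w x = c * v x

/-- `G` is the minimal positive Green function of `Δ_p + α` with pole `o`. -/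
def IsGreenFunction {X : Type*} (p : ℝ) (b : X → X → ℝ) (m : X → ℝ) (α : ℝ)
    (o : X) (G : X → ℝ) : Prop :=
  (∀ x, 0 < G x) ∧ inF p b G ∧
    (∀ x, schrodOp p b m (fun _ => α) G x = if x = o then 1 else 0) ∧
    ∀ φ : X → ℝ, inF p b φ → (∀ x, 0 < φ x) →
      (∀ x, schrodOp p b m (fun _ => α) φ x = if x = o then 1 else 0) →
      ∀ x, G x ≤ φ x

/-- `u` is a positive solution of `H[u] = 0` of minimal growth at infinity. -/
def PositiveMinimalGrowth {X : Type*} (p : ℝ) (b : X → X → ℝ) (m V : X → ℝ)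
    (u : X → ℝ) : Prop :=
  (∀ x, 0 < u x) ∧ inF p b u ∧
    ∃ K₀ : Set X, K₀.Finite ∧ (∀ x ∉ K₀, schrodOp p b m V u x = 0) ∧
      ∀ K : Set X, K.Finite → K₀ ⊆ K →
        ∀ v : X → ℝ, inF p b v → (∀ x, 0 < v x) →
          (∀ x ∉ K, 0 ≤ schrodOp p b m V v x) → (∀ x ∈ K, u x ≤ v x) →
          ∀ x ∉ K, u x ≤ v x

/-- Combinatorial graph distance from `o` to `x`. -/
def gdist {X : Type*} (b : X → X → ℝ) (o x : X) : ℕ :=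
  sInf {n : ℕ | ∃ w : ℕ → X, w 0 = o ∧ w n = x ∧ ∀ i < n, 0 < b (w i) (w (i + 1))}

/-- Total edge weight `∂_b B_k(o)` between the spheres of radii `k` and `k+1`. -/
def sphereBoundary {X : Type*} (b : X → X → ℝ) (o : X) (k : ℕ) : ℝ :=
  ∑' z : X × X, if gdist b o z.1 = k ∧ gdist b o z.2 = k + 1 then b z.1 z.2 else 0

/-- Model graph: the inner and outer curvatures are spherically symmetric. -/
def IsModelGraph {X : Type*} (b : X → X → ℝ) (m : X → ℝ) (o : X) : Prop :=
  ∀ x y, gdist b o x = gdist b o y →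
    ((1 / m x) * (∑' z, if gdist b o z = gdist b o x + 1 then b x z else 0)
        = (1 / m y) * (∑' z, if gdist b o z = gdist b o y + 1 then b y z else 0)) ∧
    ((1 / m x) * (∑' z, if gdist b o z + 1 = gdist b o x then b x z else 0)
        = (1 / m y) * (∑' z, if gdist b o z + 1 = gdist b o y then b y z else 0))

/-- The Green function of a subcritical model graph:
`G₀(x) = ∑_{k=|x|}^∞ (m(o)/∂_bB_k(o))^{1/(p-1)}`. -/
def modelGreen {X : Type*} (p : ℝ) (b : X → X → ℝ) (m : X → ℝ) (o : X) (x : X) : ℝ :=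
  ∑' k : ℕ, (m o / sphereBoundary b o (gdist b o x + k)) ^ (1 / (p - 1))

/-- The `d`-regular tree with standard weights, root `o` and distance function `ℓ`. -/
def IsRegularTree {X : Type*} (d : ℕ) (b : X → X → ℝ) (o : X) (ℓ : X → ℕ) : Prop :=
  (∀ x y, b x y = b y x) ∧ (∀ x, b x x = 0) ∧ (∀ x y, b x y = 0 ∨ b x y = 1) ∧
    ℓ o = 0 ∧
    (∀ x, {y | b x y = 1 ∧ ℓ y = ℓ x + 1}.ncard = d) ∧
    (∀ x, x ≠ o → {y | b x y = 1 ∧ ℓ y + 1 = ℓ x}.ncard = 1) ∧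
    (∀ x y, b x y = 1 → ℓ y = ℓ x + 1 ∨ ℓ x = ℓ y + 1)

/-- The simplified energy functional `E_u(φ)`. -/
def simpEnergy {X : Type*} (p : ℝ) (b : X → X → ℝ) (u φ : X → ℝ) : ℝ :=
  ∑' z : X × X,
    b z.1 z.2 * (u z.1 * u z.2) * |φ z.1 - φ z.2| ^ 2 *
      (|u z.1 - u z.2| * ((|φ z.1| + |φ z.2|) / 2)
        + (u z.1 * u z.2) ^ ((1 : ℝ) / 2) * |φ z.1 - φ z.2|) ^ (p - 2)

open Finset


lemma AT_sum_rpow_le {ι : Type*} (p : ℝ) (hp : 1 ≤ p) (s : Finset ι) (t d : ι → ℝ)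
    (ht : ∀ i ∈ s, 0 < t i) (hd : ∀ i ∈ s, 0 ≤ d i) :
    (∑ i ∈ s, d i) ^ p ≤ (∑ i ∈ s, t i) ^ (p - 1) * ∑ i ∈ s, t i ^ (1 - p) * d i ^ p := by
  rcases s.eq_empty_or_nonempty with rfl | hne
  · simp [Real.zero_rpow (by positivity : p ≠ 0)]
  · have hT : 0 < ∑ i ∈ s, t i := Finset.sum_pos ht hne
    set T := ∑ i ∈ s, t i with hTdef
    have key := Real.rpow_arith_mean_le_arith_mean_rpow s (fun i => t i / T)
      (fun i => d i * T / t i)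
      (fun i hi => div_nonneg (ht i hi).le hT.le)
      (by rw [← Finset.sum_div]; field_simp; exact hTdef.symm)
      (fun i hi => div_nonneg (mul_nonneg (hd i hi) hT.le) (ht i hi).le) hp
    have h1 : ∀ i ∈ s, t i / T * (d i * T / t i) = d i := by
      intro i hi; have := (ht i hi).ne'; field_simp
    rw [Finset.sum_congr rfl h1] at key
    refine key.trans_eq ?_
    rw [Finset.mul_sum]
    refine Finset.sum_congr rfl fun i hi => ?_
    have hti := ht i hi
    have hdi := hd i hi
    rw [Real.div_rpow (by positivity) hti.le, Real.mul_rpow hdi hT.le,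
      Real.rpow_sub hT, Real.rpow_sub hti, Real.rpow_one, Real.rpow_one]
    field_simp

lemma AT_tail_bound {β : ℝ} (hβ : 1 < β) {a : ℝ} (ha : 1 ≤ a) :
    (β - 1) * (a + 1) ^ (-β) ≤ a ^ (1 - β) - (a + 1) ^ (1 - β) := by
  have ha0 : 0 < a := by linarith
  have ha1 : 0 < a + 1 := by linarith
  have h1a : (0:ℝ) ≤ 1 / a := by positivity
  have hbern : 1 + β * (1 / a) ≤ (1 + 1 / a) ^ β :=
    one_add_mul_self_le_rpow_one_add (by linarith) hβ.le
  have h2 : (1 + 1 / a : ℝ) = (a + 1) / a := by field_simp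
  rw [h2, Real.div_rpow ha1.le ha0.le] at hbern
  have h3 : a ^ (β - 1) * (a + β) ≤ (a + 1) ^ β := by
    calc a ^ (β - 1) * (a + β) = a ^ (β - 1) * a * (1 + β * (1/a)) := by field_simp
      _ = a ^ (β - 1 + 1) * (1 + β * (1/a)) := by rw [Real.rpow_add_one ha0.ne']
      _ = a ^ β * (1 + β * (1/a)) := by norm_num
      _ ≤ a ^ β * ((a + 1) ^ β / a ^ β) := mul_le_mul_of_nonneg_left hbern (by positivity)
      _ = (a + 1) ^ β := by field_simp
  have e1 : a ^ (β - 1) * a ^ (1 - β) = 1 := by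
    rw [← Real.rpow_add ha0]; norm_num
  have e2 : (a + 1) ^ β * (a + 1) ^ (-β) = 1 := by
    rw [← Real.rpow_add ha1]; norm_num
  have h4 : (a + 1) ^ (1 - β) + (β - 1) * (a + 1) ^ (-β) = (a + β) * (a + 1) ^ (-β) := by
    rw [show (1 - β : ℝ) = 1 + -β by ring, Real.rpow_add ha1, Real.rpow_one]; ring
  have h5 : (a + β) * (a + 1) ^ (-β) ≤ a ^ (1 - β) := by
    calc (a + β) * (a + 1) ^ (-β)
        = (a ^ (β-1) * a ^ (1-β)) * ((a + β) * (a + 1) ^ (-β)) := by rw [e1, one_mul]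
      _ = (a ^ (β-1) * (a + β)) * (a ^ (1-β) * (a + 1) ^ (-β)) := by ring
      _ ≤ (a + 1) ^ β * (a ^ (1-β) * (a + 1) ^ (-β)) := by
          refine mul_le_mul_of_nonneg_right h3 ?_
          positivity
      _ = a ^ (1-β) * ((a + 1) ^ β * (a + 1) ^ (-β)) := by ring
      _ = a ^ (1-β) := by rw [e2, mul_one]
  linarith

lemma AT_summable_shift {β : ℝ} (hβ : 1 < β) (n : ℕ) :
    Summable (fun k : ℕ => ((n + k : ℕ) : ℝ) ^ (-β)) := by
  have h : Summable (fun j : ℕ => (j : ℝ) ^ (-β)) :=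
    Real.summable_nat_rpow.2 (by linarith)
  exact ((summable_nat_add_iff n).2 h).congr (fun k => by rw [add_comm k n])

lemma AT_series_upper {β : ℝ} (hβ : 1 < β) {n : ℕ} (hn : 1 ≤ n) :
    ∑' k : ℕ, ((n + k : ℕ) : ℝ) ^ (-β) ≤ (1 + 1 / (β - 1)) * (n : ℝ) ^ (1 - β) := by
  have hn0 : (0:ℝ) < n := by exact_mod_cast hn
  have hn1 : (1:ℝ) ≤ n := by exact_mod_cast hn
  have hsum := AT_summable_shift hβ n
  have htail : ∑' k : ℕ, ((n + (k+1) : ℕ) : ℝ) ^ (-β) ≤ (1 / (β - 1)) * (n : ℝ) ^ (1 - β) := by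
    apply Real.tsum_le_of_sum_range_le (fun k => by positivity)
    intro m
    have hstep : ∀ k : ℕ, ((n + (k+1) : ℕ) : ℝ) ^ (-β)
        ≤ (1/(β-1)) * (((n + k : ℕ):ℝ) ^ (1-β) - ((n + (k+1) : ℕ):ℝ) ^ (1-β)) := by
      intro k
      have ha : (1:ℝ) ≤ ((n + k : ℕ) : ℝ) := by
        have : 1 ≤ n + k := le_trans hn (Nat.le_add_right n k)
        exact_mod_cast this
      have hcast : ((n + (k+1) : ℕ) : ℝ) = ((n + k : ℕ) : ℝ) + 1 := by push_cast; ring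
      have := AT_tail_bound hβ ha
      rw [hcast]
      rw [div_mul_eq_mul_div, le_div_iff₀ (by linarith)]
      linarith
    calc ∑ k ∈ range m, ((n + (k+1) : ℕ) : ℝ) ^ (-β)
        ≤ ∑ k ∈ range m, (1/(β-1)) * (((n + k : ℕ):ℝ) ^ (1-β) - ((n + (k+1) : ℕ):ℝ) ^ (1-β)) :=
          Finset.sum_le_sum (fun k _ => hstep k)
      _ = (1/(β-1)) * (((n : ℕ):ℝ) ^ (1-β) - ((n + m : ℕ):ℝ) ^ (1-β)) := by
          rw [← Finset.mul_sum, Finset.sum_range_sub' (fun k => ((n + k : ℕ):ℝ) ^ (1-β)) m]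
          norm_num
      _ ≤ (1/(β-1)) * (n : ℝ) ^ (1 - β) := by
          have h1 : (0:ℝ) ≤ ((n + m : ℕ):ℝ) ^ (1-β) := Real.rpow_nonneg (Nat.cast_nonneg _) _
          have h2 : (0:ℝ) < 1/(β-1) := div_pos one_pos (by linarith)
          nlinarith
  have hzero : ((n + 0 : ℕ) : ℝ) ^ (-β) ≤ (n : ℝ) ^ (1 - β) := by
    simpa using Real.rpow_le_rpow_of_exponent_le hn1 (by linarith : -β ≤ 1 - β)
  calc ∑' k : ℕ, ((n + k : ℕ) : ℝ) ^ (-β)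
      = ((n + 0 : ℕ) : ℝ) ^ (-β) + ∑' k : ℕ, ((n + (k+1) : ℕ) : ℝ) ^ (-β) := by
        rw [hsum.tsum_eq_zero_add]
    _ ≤ (n : ℝ) ^ (1-β) + (1/(β-1)) * (n : ℝ) ^ (1-β) := add_le_add hzero htail
    _ = (1 + 1/(β-1)) * (n : ℝ) ^ (1-β) := by ring

lemma AT_series_lower {β : ℝ} (hβ : 1 < β) {n : ℕ} (hn : 1 ≤ n) :
    (2:ℝ) ^ (-β) * (n : ℝ) ^ (1 - β) ≤ ∑' k : ℕ, ((n + k : ℕ) : ℝ) ^ (-β) := by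
  have hn0 : (0:ℝ) < n := by exact_mod_cast hn
  have hsum := AT_summable_shift hβ n
  have h1 : ∑ k ∈ range n, ((2 * n : ℕ) : ℝ) ^ (-β) ≤ ∑ k ∈ range n, ((n + k : ℕ) : ℝ) ^ (-β) := by
    refine Finset.sum_le_sum (fun k hk => ?_)
    refine Real.rpow_le_rpow_of_nonpos ?_ ?_ (by linarith)
    · have : 1 ≤ n + k := le_trans hn (Nat.le_add_right n k)
      exact_mod_cast Nat.lt_of_lt_of_le Nat.zero_lt_one this
    · have : n + k ≤ 2 * n := by have := Finset.mem_range.1 hk; omega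
      exact_mod_cast this
  have h2 : ∑ k ∈ range n, ((n + k : ℕ) : ℝ) ^ (-β) ≤ ∑' k : ℕ, ((n + k : ℕ) : ℝ) ^ (-β) :=
    hsum.sum_le_tsum _ (fun k _ => by positivity)
  have h3 : (∑ k ∈ range n, ((2 * n : ℕ) : ℝ) ^ (-β)) = (2:ℝ) ^ (-β) * (n : ℝ) ^ (1 - β) := by
    rw [Finset.sum_const, Finset.card_range]
    have : ((2 * n : ℕ) : ℝ) ^ (-β) = (2:ℝ)^(-β) * (n:ℝ)^(-β) := by
      push_cast
      rw [Real.mul_rpow (by norm_num) hn0.le]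
    rw [this, nsmul_eq_mul]
    rw [show (1 - β : ℝ) = 1 + -β by ring, Real.rpow_add hn0, Real.rpow_one]
    ring
  linarith


lemma AT_sphere_decomp {X : Type} (p : ℝ) (hp : 0 < p) (ℓ : X → ℕ)
    (hfin : ∀ r : ℕ, {x | ℓ x = r}.Finite)
    (b : X → X → ℝ)
    (hbdef : ∀ x y, b x y = if ℓ x + 1 = ℓ y ∨ ℓ y + 1 = ℓ x then 1 else 0)
    (φ : X → ℝ) (R : ℕ) (hsupp : ∀ x, R < ℓ x → φ x = 0) :
    ∑' z : X × X, b z.1 z.2 * |φ z.1 - φ z.2| ^ p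
      = 2 * ∑ k ∈ Finset.range (R+1), ∑ x ∈ (hfin k).toFinset,
          ∑ y ∈ (hfin (k+1)).toFinset, |φ x - φ y| ^ p := by
  classical
  set B : Finset X := (Finset.range (R+2)).biUnion (fun r => (hfin r).toFinset) with hBdef
  have hB : ∀ x : X, x ∈ B ↔ ℓ x ≤ R + 1 := by
    intro x
    simp only [hBdef, Finset.mem_biUnion, Finset.mem_range, Set.Finite.mem_toFinset,
      Set.mem_setOf_eq]
    constructor
    · rintro ⟨r, hr, rfl⟩; omega
    · intro h; exact ⟨ℓ x, by omega, rfl⟩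
  have key : ∀ x y : X, R + 1 < ℓ x → b x y * |φ x - φ y| ^ p = 0 := by
    intro x y hx
    rw [hbdef]
    by_cases h : ℓ x + 1 = ℓ y ∨ ℓ y + 1 = ℓ x
    · have hφx : φ x = 0 := hsupp x (by omega)
      have hφy : φ y = 0 := hsupp y (by omega)
      rw [hφx, hφy, sub_zero, abs_zero, Real.zero_rpow hp.ne', mul_zero]
    · simp [h]
  have hsym : ∀ x y : X, b x y * |φ x - φ y| ^ p = b y x * |φ y - φ x| ^ p := by
    intro x y
    rw [hbdef x y, hbdef y x, abs_sub_comm]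
    congr 1
    exact if_congr or_comm rfl rfl
  have hF0 : ∀ z : X × X, z ∉ B ×ˢ B → b z.1 z.2 * |φ z.1 - φ z.2| ^ p = 0 := by
    intro z hz
    rw [Finset.mem_product, not_and_or] at hz
    rcases hz with hx | hy
    · exact key z.1 z.2 (by rw [hB] at hx; omega)
    · rw [hsym]
      exact key z.2 z.1 (by rw [hB] at hy; omega)
  rw [tsum_eq_sum hF0, Finset.sum_product]
  -- split the if
  have hsplit : ∀ x y : X, b x y * |φ x - φ y| ^ p
      = (if ℓ x + 1 = ℓ y then |φ x - φ y| ^ p else 0)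
        + (if ℓ y + 1 = ℓ x then |φ x - φ y| ^ p else 0) := by
    intro x y
    rw [hbdef]
    by_cases h1 : ℓ x + 1 = ℓ y <;> by_cases h2 : ℓ y + 1 = ℓ x <;>
      first
        | (exfalso; omega)
        | simp [h1, h2]
  simp only [hsplit]
  rw [Finset.sum_congr rfl (fun x _ => Finset.sum_add_distrib), Finset.sum_add_distrib]
  -- the two pieces are equal by swapping
  have hswap : ∑ x ∈ B, ∑ y ∈ B, (if ℓ y + 1 = ℓ x then |φ x - φ y| ^ p else 0)
      = ∑ x ∈ B, ∑ y ∈ B, (if ℓ x + 1 = ℓ y then |φ x - φ y| ^ p else 0) := by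
    rw [Finset.sum_comm]
    refine Finset.sum_congr rfl fun x _ => Finset.sum_congr rfl fun y _ => ?_
    rw [abs_sub_comm]
  rw [hswap, ← two_mul]
  congr 1
  -- now reduce the double sum over B to spheres
  have hdisj : (↑(Finset.range (R+2)) : Set ℕ).PairwiseDisjoint (fun r => (hfin r).toFinset) := by
    intro r _ s _ hrs
    simp only [Function.onFun]
    rw [Finset.disjoint_left]
    intro a ha hb
    rw [Set.Finite.mem_toFinset, Set.mem_setOf_eq] at ha hb
    exact hrs (ha ▸ hb ▸ rfl)
  have houter : ∀ g : X → ℝ, ∑ x ∈ B, g x = ∑ r ∈ Finset.range (R+2), ∑ x ∈ (hfin r).toFinset, g x := by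
    intro g
    rw [hBdef, Finset.sum_biUnion hdisj]
  rw [houter]
  have hinner : ∀ r : ℕ, r ≤ R + 1 → ∀ x : X, ℓ x = r →
      ∑ y ∈ B, (if ℓ x + 1 = ℓ y then |φ x - φ y| ^ p else 0)
        = if r ≤ R then ∑ y ∈ (hfin (r+1)).toFinset, |φ x - φ y| ^ p else 0 := by
    intro r hr x hx
    rw [← Finset.sum_filter]
    by_cases hrR : r ≤ R
    · rw [if_pos hrR]
      congr 1
      ext y
      simp only [Finset.mem_filter, hB, Set.Finite.mem_toFinset, Set.mem_setOf_eq, hx]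
      omega
    · rw [if_neg hrR]
      have : B.filter (fun y => ℓ x + 1 = ℓ y) = ∅ := by
        ext y
        simp only [Finset.mem_filter, hB, Finset.notMem_empty, iff_false, not_and, hx]
        omega
      rw [this, Finset.sum_empty]
  have hmain : ∑ r ∈ Finset.range (R+2), ∑ x ∈ (hfin r).toFinset,
      ∑ y ∈ B, (if ℓ x + 1 = ℓ y then |φ x - φ y| ^ p else 0)
      = ∑ r ∈ Finset.range (R+2), ∑ x ∈ (hfin r).toFinset,
        (if r ≤ R then ∑ y ∈ (hfin (r+1)).toFinset, |φ x - φ y| ^ p else 0) := by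
    refine Finset.sum_congr rfl fun r hr => Finset.sum_congr rfl fun x hx => ?_
    rw [Finset.mem_range] at hr
    rw [Set.Finite.mem_toFinset, Set.mem_setOf_eq] at hx
    exact hinner r (by omega) x hx
  rw [hmain, Finset.sum_range_succ]
  have hlast : ∀ x : X, (if R+1 ≤ R then (∑ y ∈ (hfin (R+1+1)).toFinset, |φ x - φ y| ^ p) else 0) = 0 :=
    fun x => if_neg (by omega)
  rw [Finset.sum_congr rfl (fun x _ => hlast x), Finset.sum_const_zero, add_zero]
  refine Finset.sum_congr rfl fun r hr => Finset.sum_congr rfl fun x _ => ?_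
  rw [Finset.mem_range] at hr
  rw [if_pos (by omega)]

set_option maxHeartbeats 2000000 in
/-- asymptotics on anti-trees. -/
theorem antitree_asymptotics
    {X : Type} [Countable X] [Infinite X]
    (p γ : ℝ) (hp : 1 < p) (hγ : 0 < γ)
    (ℓ : X → ℕ) (o : X)
    (hfin : ∀ r : ℕ, {x | ℓ x = r}.Finite)
    (h0 : {x | ℓ x = 0} = {o})
    (h1 : Nat.card {x | ℓ x = 1} = 1)
    (hcard : ∀ r : ℕ, 1 ≤ r → Nat.card {x | ℓ x = r + 1} = ⌈(r : ℝ) ^ γ⌉₊)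
    (b : X → X → ℝ)
    (hbdef : ∀ x y, b x y = if ℓ x + 1 = ℓ y ∨ ℓ y + 1 = ℓ x then 1 else 0) :
    (∃ c C : ℝ, 0 < c ∧ 0 < C ∧ ∀ r : ℕ, 1 ≤ r →
      c * (r : ℝ) ^ (2 * γ)
          ≤ (Nat.card {x | ℓ x = r} : ℝ) * (Nat.card {x | ℓ x = r + 1} : ℝ) ∧
        (Nat.card {x | ℓ x = r} : ℝ) * (Nat.card {x | ℓ x = r + 1} : ℝ)
          ≤ C * (r : ℝ) ^ (2 * γ)) ∧
    (pSubcritical p b (fun _ => 1) (fun _ => 0) ↔ (p - 1) / 2 < γ) ∧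
    ((p - 1) / 2 < γ →
      ∃ c C : ℝ, 0 < c ∧ 0 < C ∧ ∀ z : X, z ≠ o →
        c * (ℓ z : ℝ) ^ (-(2 * γ - p + 1) / (p - 1))
            ≤ (∑' k : ℕ, ((1 : ℝ) / ((Nat.card {x | ℓ x = ℓ z + k} : ℝ)
                * (Nat.card {x | ℓ x = ℓ z + k + 1} : ℝ))) ^ (1 / (p - 1))) ∧
          (∑' k : ℕ, ((1 : ℝ) / ((Nat.card {x | ℓ x = ℓ z + k} : ℝ)
                * (Nat.card {x | ℓ x = ℓ z + k + 1} : ℝ))) ^ (1 / (p - 1)))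
            ≤ C * (ℓ z : ℝ) ^ (-(2 * γ - p + 1) / (p - 1))) := by
  have hp1 : (0:ℝ) < p - 1 := by linarith
  have hp0 : (0:ℝ) < p := by linarith
  -- cardinality facts
  have hN0 : Nat.card {x | ℓ x = 0} = 1 := by
    rw [h0, Nat.card_coe_set_eq, Set.ncard_singleton]
  have hNpos : ∀ r : ℕ, 1 ≤ Nat.card {x | ℓ x = r} := by
    intro r
    match r with
    | 0 => rw [hN0]
    | 1 => rw [h1]
    | (s+2) =>
      rw [hcard (s+1) (by omega)]
      have hpos : (0:ℝ) < ((s+1:ℕ):ℝ) ^ γ :=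
        Real.rpow_pos_of_pos (by exact_mod_cast Nat.succ_pos s) γ
      exact Nat.ceil_pos.mpr hpos
  have h2pos : (0:ℝ) < (2:ℝ)^(-γ) := Real.rpow_pos_of_pos (by norm_num) _
  have h2neg : (2:ℝ)^(-γ) ≤ 1 :=
    Real.rpow_le_one_of_one_le_of_nonpos (by norm_num) (by linarith)
  have hprod : ∀ r : ℕ, 1 ≤ r →
      (2:ℝ)^(-γ) * (r : ℝ) ^ (2*γ)
        ≤ (Nat.card {x | ℓ x = r} : ℝ) * (Nat.card {x | ℓ x = r+1} : ℝ) ∧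
      (Nat.card {x | ℓ x = r} : ℝ) * (Nat.card {x | ℓ x = r+1} : ℝ)
        ≤ 4 * (r : ℝ) ^ (2*γ) := by
    intro r hr
    rcases Nat.lt_or_ge r 2 with hr2 | hr2
    · have hre : r = 1 := by omega
      subst hre
      have hc2 : Nat.card {x | ℓ x = 1 + 1} = 1 := by
        rw [hcard 1 le_rfl]
        norm_num [Real.one_rpow]
      rw [h1, hc2]
      norm_num [Real.one_rpow]
      exact h2neg
    · obtain ⟨s, hs1, rfl⟩ : ∃ s : ℕ, 1 ≤ s ∧ r = s + 1 := ⟨r - 1, by omega, by omega⟩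
      have ha1 : (1:ℝ) ≤ (s:ℝ) := by exact_mod_cast hs1
      have hrpos : (0:ℝ) < (s:ℝ) + 1 := by linarith
      rw [hcard s hs1, hcard (s+1) (by omega)]
      push_cast
      set A := (s:ℝ) ^ γ with hA
      set Bv := ((s:ℝ) + 1) ^ γ with hB
      have hA1 : (1:ℝ) ≤ A := Real.one_le_rpow ha1 hγ.le
      have hB1 : (1:ℝ) ≤ Bv := Real.one_le_rpow (by linarith) hγ.le
      have hAB : A ≤ Bv := Real.rpow_le_rpow (by linarith) (by linarith) hγ.le
      have hceilA1 : A ≤ (⌈A⌉₊ : ℝ) := Nat.le_ceil A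
      have hceilA2 : (⌈A⌉₊ : ℝ) ≤ A + 1 := (Nat.ceil_lt_add_one (by positivity)).le
      have hceilB1 : Bv ≤ (⌈Bv⌉₊ : ℝ) := Nat.le_ceil Bv
      have hceilB2 : (⌈Bv⌉₊ : ℝ) ≤ Bv + 1 := (Nat.ceil_lt_add_one (by positivity)).le
      have h2γ : ((s:ℝ) + 1) ^ (2*γ) = Bv * Bv := by
        rw [show 2*γ = γ + γ by ring, Real.rpow_add hrpos]
      have hhalf : (2:ℝ)^(-γ) * Bv ≤ A := by
        have h1' : ((s:ℝ) + 1)/2 ≤ (s:ℝ) := by linarith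
        have h2' : (((s:ℝ) + 1)/2) ^ γ ≤ A := Real.rpow_le_rpow (by positivity) h1' hγ.le
        have h3' : (((s:ℝ) + 1)/2) ^ γ = Bv / 2^γ := Real.div_rpow hrpos.le (by norm_num : (0:ℝ) ≤ 2) γ
        have h4' : (2:ℝ)^(-γ) = ((2:ℝ)^γ)⁻¹ := Real.rpow_neg (by norm_num) γ
        have h5' : (0:ℝ) < (2:ℝ)^γ := Real.rpow_pos_of_pos two_pos γ
        rw [h4', inv_mul_eq_div]
        rw [h3'] at h2'
        exact h2'
      constructor
      · calc (2:ℝ)^(-γ) * ((s:ℝ) + 1) ^ (2*γ) = ((2:ℝ)^(-γ) * Bv) * Bv := by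
              rw [h2γ]; ring
          _ ≤ A * Bv := mul_le_mul_of_nonneg_right hhalf (by positivity)
          _ ≤ (⌈A⌉₊ : ℝ) * (⌈Bv⌉₊ : ℝ) := by nlinarith
      · calc (⌈A⌉₊ : ℝ) * (⌈Bv⌉₊ : ℝ) ≤ (A + 1) * (Bv + 1) := by nlinarith
          _ ≤ (2*Bv) * (2*Bv) := by nlinarith
          _ = 4 * ((s:ℝ) + 1) ^ (2*γ) := by rw [h2γ]; ring
  -- common notation for parts (ii) and (iii)
  set q : ℝ := 1 / (p - 1) with hqdef
  have hq : 0 < q := by rw [hqdef]; positivity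
  set β : ℝ := 2 * γ * q with hβdef
  have hβpos : 0 < β := by
    have := mul_pos (mul_pos two_pos hγ) hq
    rw [hβdef]; exact this
  set w : ℕ → ℝ := fun k =>
    (Nat.card {x | ℓ x = k} : ℝ) * (Nat.card {x | ℓ x = k+1} : ℝ) with hwdef
  have hNR : ∀ k : ℕ, (1:ℝ) ≤ (Nat.card {x | ℓ x = k} : ℝ) := fun k => by
    exact_mod_cast hNpos k
  have hwk : ∀ k, w k = (Nat.card {x | ℓ x = k} : ℝ) * (Nat.card {x | ℓ x = k+1} : ℝ) :=
    fun k => rfl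
  have hw1 : ∀ k, 1 ≤ w k := by
    intro k
    rw [hwk]
    have := hNR k; have := hNR (k+1)
    nlinarith
  have hwpos : ∀ k, 0 < w k := fun k => lt_of_lt_of_le one_pos (hw1 k)
  set t : ℕ → ℝ := fun k => w k ^ (-q) with htdef
  have htk : ∀ k, t k = w k ^ (-q) := fun k => rfl
  have htpos : ∀ k, 0 < t k := fun k => Real.rpow_pos_of_pos (hwpos k) _
  have hw0 : w 0 = 1 := by
    rw [hwk, hN0, h1]; norm_num
  have ht0 : t 0 = 1 := by
    rw [htk, hw0, Real.one_rpow]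
  have hq1 : q * (p - 1) = 1 := by rw [hqdef]; field_simp
  have hwq : ∀ k, w k * t k ^ p = t k := by
    intro k
    have hw := hwpos k
    rw [htk]
    rw [← Real.rpow_mul hw.le]
    rw [show w k * w k ^ (-q * p) = w k ^ (1:ℝ) * w k ^ (-q * p) by rw [Real.rpow_one],
      ← Real.rpow_add hw]
    congr 1
    rw [hqdef]; field_simp; ring
  have hzq : ∀ z : ℝ, 0 < z → (z ^ (-q)) ^ (1 - p) = z := by
    intro z hz
    rw [← Real.rpow_mul hz.le, show -q * (1-p) = q * (p-1) by ring, hq1, Real.rpow_one]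
  have htw : ∀ k, t k ^ (1 - p) = w k := fun k => hzq (w k) (hwpos k)
  have ht_up : ∀ k : ℕ, 1 ≤ k → t k ≤ (2:ℝ)^(γ*q) * (k:ℝ)^(-β) := by
    intro k hk
    have hk1 : (1:ℝ) ≤ (k:ℝ) := by exact_mod_cast hk
    have hkpos : (0:ℝ) < (k:ℝ) := by linarith
    have hlow : (2:ℝ)^(-γ) * (k:ℝ)^(2*γ) ≤ w k := (hprod k hk).1
    have hbase : (0:ℝ) < (2:ℝ)^(-γ) * (k:ℝ)^(2*γ) := by positivity
    have h1' : t k ≤ ((2:ℝ)^(-γ) * (k:ℝ)^(2*γ)) ^ (-q) := by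
      rw [htk]
      exact Real.rpow_le_rpow_of_nonpos hbase hlow (neg_nonpos.mpr hq.le)
    have h2' : ((2:ℝ)^(-γ) * (k:ℝ)^(2*γ)) ^ (-q)
        = (2:ℝ)^(γ*q) * (k:ℝ)^(-β) := by
      rw [Real.mul_rpow (by positivity) (by positivity),
        ← Real.rpow_mul (by norm_num : (0:ℝ) ≤ 2),
        ← Real.rpow_mul hkpos.le]
      rw [show -γ * -q = γ * q by ring, show 2 * γ * -q = -β by rw [hβdef]; ring]
    linarith [h1', h2'.le, h2'.ge]
  have ht_lo : ∀ k : ℕ, 1 ≤ k → (4:ℝ)^(-q) * (k:ℝ)^(-β) ≤ t k := by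
    intro k hk
    have hk1 : (1:ℝ) ≤ (k:ℝ) := by exact_mod_cast hk
    have hkpos : (0:ℝ) < (k:ℝ) := by linarith
    have hup : w k ≤ 4 * (k:ℝ)^(2*γ) := (hprod k hk).2
    have h1' : (4 * (k:ℝ)^(2*γ)) ^ (-q) ≤ t k := by
      rw [htk]
      exact Real.rpow_le_rpow_of_nonpos (hwpos k) hup (neg_nonpos.mpr hq.le)
    have h2' : ((4:ℝ) * (k:ℝ)^(2*γ)) ^ (-q) = (4:ℝ)^(-q) * (k:ℝ)^(-β) := by
      rw [Real.mul_rpow (by norm_num) (by positivity), ← Real.rpow_mul hkpos.le]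
      rw [show 2 * γ * -q = -β by rw [hβdef]; ring]
    linarith [h1', h2'.le]
  have hβiff : ((p - 1) / 2 < γ) ↔ 1 < β := by
    rw [hβdef, hqdef]
    rw [show 2 * γ * (1/(p-1)) = 2 * γ / (p - 1) by ring, lt_div_iff₀ hp1]
    constructor <;> intro <;> linarith
  refine ⟨⟨(2:ℝ)^(-γ), 4, h2pos, by norm_num, hprod⟩, ?_, ?_⟩
  · -- part (ii)
    constructor
    · -- subcritical → γ > (p-1)/2
      intro hsub
      by_contra hcon
      have hβle : β ≤ 1 := by
        by_contra hb
        push_neg at hb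
        exact hcon (hβiff.2 hb)
      obtain ⟨W, hW0, hWne, hQ⟩ := hsub
      obtain ⟨x₀, hx₀⟩ : ∃ x, W x ≠ 0 := Function.ne_iff.mp hWne
      have hWx₀ : 0 < W x₀ := lt_of_le_of_ne (hW0 x₀) (Ne.symm hx₀)
      set n₀ := ℓ x₀ with hn₀def
      have h4q : (0:ℝ) < (4:ℝ)^(-q) := Real.rpow_pos_of_pos (by norm_num) _
      -- lower bound t by harmonic terms
      have htlow : ∀ k : ℕ, (4:ℝ)^(-q) * (1/((k:ℝ)+1)) ≤ t k := by
        intro k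
        rcases Nat.eq_zero_or_pos k with rfl | hk
        · rw [ht0]
          have h4le : (4:ℝ)^(-q) ≤ 1 :=
            Real.rpow_le_one_of_one_le_of_nonpos (by norm_num) (by linarith)
          norm_num
          linarith
        · have hk1 : (1:ℝ) ≤ (k:ℝ) := by exact_mod_cast hk
          have h2' : (k:ℝ)^(-(1:ℝ)) ≤ (k:ℝ)^(-β) :=
            Real.rpow_le_rpow_of_exponent_le hk1 (by linarith)
          have h3' : (k:ℝ)^(-(1:ℝ)) = ((k:ℝ))⁻¹ := Real.rpow_neg_one _
          have h4' : (1/((k:ℝ)+1)) ≤ ((k:ℝ))⁻¹ := by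
            rw [one_div]
            exact inv_anti₀ (by linarith) (by linarith)
          have h5' : (1/((k:ℝ)+1)) ≤ (k:ℝ)^(-β) := by
            rw [← h3'] at h4'
            linarith
          calc (4:ℝ)^(-q) * (1/((k:ℝ)+1)) ≤ (4:ℝ)^(-q) * (k:ℝ)^(-β) :=
                mul_le_mul_of_nonneg_left h5' h4q.le
            _ ≤ t k := ht_lo k hk
      -- divergence of partial sums of t
      have hdiverge : ∀ C : ℝ, ∃ M : ℕ, C < ∑ k ∈ Finset.range M, t k := by
        intro C
        have htends := Real.tendsto_sum_range_one_div_nat_succ_atTop.const_mul_atTop h4q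
        obtain ⟨M, hM⟩ := (htends.eventually_gt_atTop C).exists
        refine ⟨M, lt_of_lt_of_le hM ?_⟩
        rw [Finset.mul_sum]
        exact Finset.sum_le_sum fun k _ => htlow k
      obtain ⟨M, hM⟩ := hdiverge ((W x₀ / 2)^(-q) + ∑ k ∈ Finset.range n₀, t k)
      have hWq : (0:ℝ) < (W x₀/2)^(-q) := Real.rpow_pos_of_pos (by linarith) _
      have hn₀M : n₀ ≤ M := by
        by_contra hcon'
        push_neg at hcon'
        have hsub' : ∑ k ∈ Finset.range M, t k ≤ ∑ k ∈ Finset.range n₀, t k :=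
          Finset.sum_le_sum_of_subset_of_nonneg
            (Finset.range_subset_range.mpr hcon'.le) (fun k _ _ => (htpos k).le)
        linarith
      set T : ℝ := ∑ k ∈ Finset.Ico n₀ M, t k with hTdef
      have hsplit : ∑ k ∈ Finset.range n₀, t k + T = ∑ k ∈ Finset.range M, t k := by
        rw [hTdef]
        exact Finset.sum_range_add_sum_Ico t hn₀M
      have hT_ge : (W x₀/2)^(-q) ≤ T := by linarith
      have hTpos : 0 < T := lt_of_lt_of_le hWq hT_ge
      -- test function
      set f : ℕ → ℝ := fun k => (∑ j ∈ Finset.Ico (max k n₀) M, t j) / T with hfdef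
      have hfk : ∀ k, f k = (∑ j ∈ Finset.Ico (max k n₀) M, t j) / T := fun k => rfl
      have hf_one : ∀ k, k ≤ n₀ → f k = 1 := by
        intro k hk
        rw [hfk, max_eq_right hk, ← hTdef, div_self hTpos.ne']
      have hf_zero : ∀ k, M ≤ k → f k = 0 := by
        intro k hk
        rw [hfk, Finset.Ico_eq_empty, Finset.sum_empty, zero_div]
        exact not_lt.mpr (le_trans hk (le_max_left k n₀))
      have hf_diff : ∀ k, n₀ ≤ k → k < M → f k - f (k+1) = t k / T := by
        intro k hk hkM
        rw [hfk k, hfk (k+1), max_eq_left hk, max_eq_left (by omega)]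
        rw [Finset.sum_eq_sum_Ico_succ_bot hkM t]
        rw [div_sub_div_same, add_sub_cancel_right]
      have hf_diff0 : ∀ k, k < n₀ ∨ M ≤ k → f k - f (k+1) = 0 := by
        intro k hk
        rcases hk with hk | hk
        · rw [hf_one k (by omega), hf_one (k+1) (by omega), sub_self]
        · rw [hf_zero k hk, hf_zero (k+1) (by omega), sub_self]
      set φ : X → ℝ := fun x => f (ℓ x) with hφdef
      have hφx : ∀ x, φ x = f (ℓ x) := fun x => rfl
      have hφsupp : (Function.support φ).Finite := by
        apply Set.Finite.subset (((Finset.range M).biUnion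
          (fun r => (hfin r).toFinset)).finite_toSet)
        intro x hx
        rw [Function.mem_support] at hx
        have hxM : ℓ x < M := by
          by_contra hcon'
          push_neg at hcon'
          exact hx (by rw [hφx]; exact hf_zero _ hcon')
        simp only [Finset.coe_biUnion, Set.mem_iUnion, Finset.mem_coe, Finset.mem_range,
          Set.Finite.mem_toFinset, Set.mem_setOf_eq]
        exact ⟨ℓ x, hxM, rfl⟩
      have hQφ := hQ φ hφsupp
      -- energy computation
      have hsupp' : ∀ x, M < ℓ x → φ x = 0 := fun x hx => by
        rw [hφx]; exact hf_zero _ (by omega)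
      have hdec := AT_sphere_decomp p hp0 ℓ hfin b hbdef φ M hsupp'
      have hEk : ∀ k, (∑ x ∈ (hfin k).toFinset, ∑ y ∈ (hfin (k+1)).toFinset, |φ x - φ y| ^ p)
          = w k * |f k - f (k+1)| ^ p := by
        intro k
        have hcardF : ∀ m : ℕ, (((hfin m).toFinset.card : ℕ) : ℝ)
            = (Nat.card {x | ℓ x = m} : ℝ) := by
          intro m
          rw [Nat.card_coe_set_eq, Set.ncard_eq_toFinset_card _ (hfin m)]
        have hconst : ∀ x ∈ (hfin k).toFinset, ∀ y ∈ (hfin (k+1)).toFinset,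
            |φ x - φ y| ^ p = |f k - f (k+1)| ^ p := by
          intro x hx y hy
          rw [Set.Finite.mem_toFinset] at hx hy
          have hx' : ℓ x = k := hx
          have hy' : ℓ y = k + 1 := hy
          rw [hφx, hφx, hx', hy']
        calc ∑ x ∈ (hfin k).toFinset, ∑ y ∈ (hfin (k+1)).toFinset, |φ x - φ y| ^ p
            = ∑ x ∈ (hfin k).toFinset, ∑ _y ∈ (hfin (k+1)).toFinset, |f k - f (k+1)| ^ p := by
              exact Finset.sum_congr rfl fun x hx =>
                Finset.sum_congr rfl fun y hy => hconst x hx y hy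
          _ = w k * |f k - f (k+1)| ^ p := by
              rw [Finset.sum_const, Finset.sum_const, nsmul_eq_mul, nsmul_eq_mul, hwk,
                ← hcardF k, ← hcardF (k+1)]
              ring
      have henergy : (1/2) * (∑' z : X × X, b z.1 z.2 * |φ z.1 - φ z.2| ^ p)
          = T ^ ((1:ℝ) - p) := by
        rw [hdec]
        rw [Finset.sum_congr rfl fun k _ => hEk k]
        have hrestrict : ∑ k ∈ Finset.range (M+1), w k * |f k - f (k+1)| ^ p
            = ∑ k ∈ Finset.Ico n₀ M, w k * |f k - f (k+1)| ^ p := by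
          symm
          apply Finset.sum_subset
          · intro k hk
            rw [Finset.mem_Ico] at hk
            rw [Finset.mem_range]
            omega
          · intro k hk1 hk2
            rw [Finset.mem_Ico] at hk2
            rw [hf_diff0 k (by omega), abs_zero, Real.zero_rpow hp0.ne', mul_zero]
        rw [hrestrict]
        have hterm : ∀ k ∈ Finset.Ico n₀ M, w k * |f k - f (k+1)| ^ p = t k / T ^ p := by
          intro k hk
          rw [Finset.mem_Ico] at hk
          rw [hf_diff k hk.1 hk.2, abs_of_pos (div_pos (htpos k) hTpos),
            Real.div_rpow (htpos k).le hTpos.le, ← mul_div_assoc, hwq k]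
        rw [Finset.sum_congr rfl hterm, ← Finset.sum_div, ← hTdef]
        rw [Real.rpow_sub hTpos, Real.rpow_one]
        ring
      -- the potential part
      have hφx₀ : φ x₀ = 1 := by rw [hφx, ← hn₀def, hf_one n₀ le_rfl]
      have hgsupp : ∀ x ∉ hφsupp.toFinset, W x * |φ x| ^ p = 0 := by
        intro x hx
        rw [Set.Finite.mem_toFinset, Function.mem_support, not_not] at hx
        rw [hx, abs_zero, Real.zero_rpow hp0.ne', mul_zero]
      have hgsum : Summable (fun x => W x * |φ x| ^ p) := summable_of_ne_finset_zero hgsupp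
      have hge : W x₀ ≤ ∑' x, W x * |φ x| ^ p := by
        have := hgsum.le_tsum x₀ (fun j _ => mul_nonneg (hW0 j) (Real.rpow_nonneg (abs_nonneg _) _))
        rw [hφx₀] at this
        simpa using this
      -- evaluate pEnergy
      have hval : pEnergy p b (fun _ => 1) (fun x => (0:ℝ) - W x) φ
          = T ^ ((1:ℝ) - p) - ∑' x, W x * |φ x| ^ p := by
        rw [pEnergy, henergy]
        have h2nd : (∑' x, (fun _ => (1:ℝ)) x * ((fun x => (0:ℝ) - W x) x) * |φ x| ^ p)
            = -(∑' x, W x * |φ x| ^ p) := by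
          rw [← tsum_neg]
          exact tsum_congr fun x => by ring
        rw [h2nd]
        ring
      have hQφ' : (0:ℝ) ≤ T ^ ((1:ℝ) - p) - ∑' x, W x * |φ x| ^ p := by
        have hsame : pEnergy p b (fun _ => 1) (fun x => (fun _ => (0:ℝ)) x - W x) φ
            = pEnergy p b (fun _ => 1) (fun x => (0:ℝ) - W x) φ := rfl
        rw [hsame, hval] at hQφ
        exact hQφ
      -- but T^{1-p} ≤ W x₀ / 2
      have hTbound : T ^ ((1:ℝ) - p) ≤ W x₀ / 2 := by
        have h1' : T ^ ((1:ℝ)-p) ≤ ((W x₀/2)^(-q)) ^ ((1:ℝ)-p) :=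
          Real.rpow_le_rpow_of_nonpos hWq hT_ge (by linarith)
        have h2' : ((W x₀/2)^(-q)) ^ ((1:ℝ)-p) = W x₀/2 := hzq _ (by linarith)
        linarith
      linarith

    · -- γ > (p-1)/2 → subcritical
      intro hγ2
      have hβ1 : 1 < β := hβiff.1 hγ2
      have htsum : Summable t := by
        rw [← summable_nat_add_iff 1]
        refine Summable.of_nonneg_of_le (fun k => (htpos _).le) (fun k => ?_)
          ((AT_summable_shift hβ1 1).mul_left ((2:ℝ)^(γ*q)))
        have h' := ht_up (k+1) (by omega)
        simpa [Nat.add_comm] using h'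
      set S : ℝ := ∑' k, t k with hSdef
      have hS1 : 1 ≤ S := by
        have := htsum.le_tsum 0 (fun j _ => (htpos j).le)
        rw [ht0] at this
        exact this
      have hSpos : 0 < S := lt_of_lt_of_le one_pos hS1
      refine ⟨fun x => if x = o then S^((1:ℝ)-p) else 0, ?_, ?_, ?_⟩
      · intro x
        by_cases hx : x = o <;> simp [hx]
        exact (Real.rpow_pos_of_pos hSpos _).le
      · intro hWeq
        have h' := congrFun hWeq o
        simp only [if_pos rfl, Pi.zero_apply] at h'
        exact (Real.rpow_pos_of_pos hSpos ((1:ℝ)-p)).ne' h'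
      · intro φ hφ
        -- support bound
        set R := hφ.toFinset.sup ℓ with hRdef
        have hsupp : ∀ x, R < ℓ x → φ x = 0 := by
          intro x hx
          by_contra hne
          have hmem : x ∈ hφ.toFinset := by
            rw [Set.Finite.mem_toFinset]; exact hne
          have := Finset.le_sup (f := ℓ) hmem
          omega
        have hdec := AT_sphere_decomp p hp0 ℓ hfin b hbdef φ R hsupp
        set E : ℕ → ℝ := fun k => ∑ x ∈ (hfin k).toFinset,
          ∑ y ∈ (hfin (k+1)).toFinset, |φ x - φ y| ^ p with hEdef
        have hEk : ∀ k, E k = ∑ x ∈ (hfin k).toFinset,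
            ∑ y ∈ (hfin (k+1)).toFinset, |φ x - φ y| ^ p := fun k => rfl
        have hEnonneg : ∀ k, 0 ≤ E k := by
          intro k
          rw [hEk]
          refine Finset.sum_nonneg fun x _ => Finset.sum_nonneg fun y _ => ?_
          exact Real.rpow_nonneg (abs_nonneg _) _
        set a : ℕ → ℝ := fun k => (∑ x ∈ (hfin k).toFinset, φ x)
            / (Nat.card {x | ℓ x = k} : ℝ) with hadef
        have hak : ∀ k, a k = (∑ x ∈ (hfin k).toFinset, φ x)
            / (Nat.card {x | ℓ x = k} : ℝ) := fun k => rfl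
        have hcardF : ∀ k, (((hfin k).toFinset.card : ℕ) : ℝ)
            = (Nat.card {x | ℓ x = k} : ℝ) := by
          intro k
          rw [Nat.card_coe_set_eq, Set.ncard_eq_toFinset_card _ (hfin k)]
        have hNpos' : ∀ k : ℕ, (0:ℝ) < (Nat.card {x | ℓ x = k} : ℝ) :=
          fun k => lt_of_lt_of_le one_pos (hNR k)
        -- Jensen step
        have hjensen : ∀ k, w k * |a k - a (k+1)| ^ p ≤ E k := by
          intro k
          have hNk := hNpos' k
          have hNk1 := hNpos' (k+1)
          have hwkpos := hwpos k
          have hdiffsum : ∑ x ∈ (hfin k).toFinset, ∑ y ∈ (hfin (k+1)).toFinset, (φ x - φ y)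
              = (∑ x ∈ (hfin k).toFinset, φ x) * (Nat.card {x | ℓ x = k+1} : ℝ)
                - (Nat.card {x | ℓ x = k} : ℝ) * (∑ y ∈ (hfin (k+1)).toFinset, φ y) := by
            have hinner : ∀ x : X, ∑ y ∈ (hfin (k+1)).toFinset, (φ x - φ y)
                = ((hfin (k+1)).toFinset.card : ℝ) * φ x
                  - ∑ y ∈ (hfin (k+1)).toFinset, φ y := by
              intro x
              rw [Finset.sum_sub_distrib, Finset.sum_const, nsmul_eq_mul]
            rw [Finset.sum_congr rfl (fun x _ => hinner x), Finset.sum_sub_distrib,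
              Finset.sum_const, nsmul_eq_mul, ← Finset.mul_sum]
            rw [hcardF k, hcardF (k+1)]
            ring
          have hdiff : a k - a (k+1)
              = (∑ x ∈ (hfin k).toFinset, ∑ y ∈ (hfin (k+1)).toFinset, (φ x - φ y)) / w k := by
            rw [hak k, hak (k+1), div_sub_div _ _ hNk.ne' hNk1.ne', hdiffsum, hwk]
          have habs : |a k - a (k+1)|
              ≤ (∑ x ∈ (hfin k).toFinset, ∑ y ∈ (hfin (k+1)).toFinset, |φ x - φ y|) / w k := by
            rw [hdiff, abs_div, abs_of_pos hwkpos]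
            gcongr
            calc |∑ x ∈ (hfin k).toFinset, ∑ y ∈ (hfin (k+1)).toFinset, (φ x - φ y)|
                ≤ ∑ x ∈ (hfin k).toFinset, |∑ y ∈ (hfin (k+1)).toFinset, (φ x - φ y)| :=
                  Finset.abs_sum_le_sum_abs _ _
              _ ≤ ∑ x ∈ (hfin k).toFinset, ∑ y ∈ (hfin (k+1)).toFinset, |φ x - φ y| :=
                  Finset.sum_le_sum fun x _ => Finset.abs_sum_le_sum_abs _ _
          have hL5 := AT_sum_rpow_le p hp.le ((hfin k).toFinset ×ˢ (hfin (k+1)).toFinset)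
            (fun _ => 1) (fun z => |φ z.1 - φ z.2|)
            (fun _ _ => one_pos) (fun _ _ => abs_nonneg _)
          rw [Finset.sum_const, Finset.card_product, nsmul_eq_mul, mul_one] at hL5
          simp only [Real.one_rpow, one_mul] at hL5
          rw [Finset.sum_product, Finset.sum_product] at hL5
          have hcardw : (((hfin k).toFinset.card * (hfin (k+1)).toFinset.card : ℕ) : ℝ) = w k := by
            push_cast
            rw [hcardF k, hcardF (k+1), hwk]
          rw [hcardw] at hL5
          -- hL5 : (∑∑ |φx - φy|)^p ≤ (w k)^(p-1) * ∑∑ |φx-φy|^p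
          set c2 : ℝ := ∑ x ∈ (hfin k).toFinset, ∑ y ∈ (hfin (k+1)).toFinset, |φ x - φ y|
            with hc2def
          have hc2nonneg : 0 ≤ c2 := by
            rw [hc2def]
            exact Finset.sum_nonneg fun x _ => Finset.sum_nonneg fun y _ => abs_nonneg _
          have hwp : w k ^ (p-1) * w k = w k ^ p := by
            rw [show w k ^ (p-1) * w k = w k ^ (p-1) * w k ^ (1:ℝ) by rw [Real.rpow_one],
              ← Real.rpow_add hwkpos]
            norm_num
          have hwppos : (0:ℝ) < w k ^ p := Real.rpow_pos_of_pos hwkpos _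
          calc w k * |a k - a (k+1)| ^ p
              ≤ w k * (c2 / w k) ^ p := by
                refine mul_le_mul_of_nonneg_left
                  (Real.rpow_le_rpow (abs_nonneg _) habs hp0.le) hwkpos.le
            _ = w k * (c2 ^ p / w k ^ p) := by
                rw [Real.div_rpow hc2nonneg hwkpos.le]
            _ ≤ w k * ((w k ^ (p-1) * E k) / w k ^ p) := by
                have hnum : c2 ^ p ≤ w k ^ (p-1) * E k := by
                  rw [hEk]; exact hL5
                gcongr
            _ = E k := by
                field_simp
                linear_combination E k * hwp
        -- telescoping and Hölder
        have hSf0 : (hfin 0).toFinset = {o} := by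
          ext x
          rw [Set.Finite.mem_toFinset]
          simp [h0]
        have ha0 : a 0 = φ o := by
          rw [hak, hSf0, Finset.sum_singleton, hN0]
          norm_num
        have haR : a (R+1) = 0 := by
          rw [hak, Finset.sum_eq_zero, zero_div]
          intro x hx
          rw [Set.Finite.mem_toFinset] at hx
          have hx' : ℓ x = R + 1 := hx
          exact hsupp x (by omega)
        have htel : |φ o| ≤ ∑ k ∈ Finset.range (R+1), |a k - a (k+1)| := by
          have hts := Finset.sum_range_sub' a (R+1)
          calc |φ o| = |∑ k ∈ Finset.range (R+1), (a k - a (k+1))| := by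
                rw [hts, ha0, haR, sub_zero]
            _ ≤ ∑ k ∈ Finset.range (R+1), |a k - a (k+1)| := Finset.abs_sum_le_sum_abs _ _
        have hH := AT_sum_rpow_le p hp.le (Finset.range (R+1)) t
          (fun k => |a k - a (k+1)|) (fun k _ => htpos k) (fun k _ => abs_nonneg _)
        have hsum_nonneg : 0 ≤ ∑ k ∈ Finset.range (R+1), |a k - a (k+1)| :=
          Finset.sum_nonneg fun k _ => abs_nonneg _
        have hH2 : (∑ k ∈ Finset.range (R+1), |a k - a (k+1)|) ^ p
            ≤ S^(p-1) * ∑ k ∈ Finset.range (R+1), E k := by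
          refine hH.trans ?_
          have h1' : ∑ k ∈ Finset.range (R+1), t k ^ (1-p) * |a k - a (k+1)| ^ p
              ≤ ∑ k ∈ Finset.range (R+1), E k := by
            refine Finset.sum_le_sum fun k _ => ?_
            rw [htw k]
            exact hjensen k
          have h2' : (∑ k ∈ Finset.range (R+1), t k) ^ (p-1) ≤ S ^ (p-1) :=
            Real.rpow_le_rpow (Finset.sum_nonneg fun k _ => (htpos k).le)
              (htsum.sum_le_tsum _ (fun k _ => (htpos k).le)) (by linarith)
          refine mul_le_mul h2' h1' ?_ (Real.rpow_nonneg hSpos.le _)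
          exact Finset.sum_nonneg fun k _ => mul_nonneg
            (Real.rpow_nonneg (htpos k).le _) (Real.rpow_nonneg (abs_nonneg _) _)
        have hfinal : |φ o| ^ p ≤ S^(p-1) * ∑ k ∈ Finset.range (R+1), E k :=
          le_trans (Real.rpow_le_rpow (abs_nonneg _) htel hp0.le) hH2
        -- assemble energy
        have hDsum : (1/2) * (∑' z : X × X, b z.1 z.2 * |φ z.1 - φ z.2| ^ p)
            = ∑ k ∈ Finset.range (R+1), E k := by
          rw [hdec]
          simp only [hEk]
          ring
        have hmul : S^((1:ℝ)-p) * |φ o|^p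
            ≤ S^((1:ℝ)-p) * (S^(p-1) * ∑ k ∈ Finset.range (R+1), E k) :=
          mul_le_mul_of_nonneg_left hfinal (Real.rpow_nonneg hSpos.le _)
        have hSS : S^((1:ℝ)-p) * S^(p-1) = 1 := by
          rw [← Real.rpow_add hSpos]
          norm_num
        have heq : S^((1:ℝ)-p) * (S^(p-1) * ∑ k ∈ Finset.range (R+1), E k)
            = ∑ k ∈ Finset.range (R+1), E k := by
          rw [← mul_assoc, hSS, one_mul]
        have hval : pEnergy p b (fun _ => 1) (fun x => (0:ℝ) - (if x = o then S^((1:ℝ)-p) else 0)) φ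
            = (∑ k ∈ Finset.range (R+1), E k) - S^((1:ℝ)-p) * |φ o|^p := by
          rw [pEnergy]
          have h2nd : (∑' x, (fun _ => (1:ℝ)) x
              * ((fun x => (0:ℝ) - (if x = o then S^((1:ℝ)-p) else 0)) x) * |φ x| ^ p)
              = -(S^((1:ℝ)-p) * |φ o|^p) := by
            rw [tsum_eq_single o]
            · show (1:ℝ) * ((0:ℝ) - (if o = o then S^((1:ℝ)-p) else 0)) * |φ o|^p
                = -(S^((1:ℝ)-p) * |φ o|^p)
              rw [if_pos rfl]
              ring
            · intro x hx
              show (1:ℝ) * ((0:ℝ) - (if x = o then S^((1:ℝ)-p) else 0)) * |φ x|^p = 0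
              rw [if_neg hx]
              ring
          rw [h2nd, hDsum]
          ring
        show 0 ≤ pEnergy p b (fun _ => 1) (fun x => (0:ℝ) - (if x = o then S^((1:ℝ)-p) else 0)) φ
        rw [hval]
        linarith [hmul, heq.le, heq.ge]

  · -- part (iii)
    intro hγ2
    have hβ1 : 1 < β := hβiff.1 hγ2
    have hCpos : (0:ℝ) < (2:ℝ)^(γ*q) * (1 + 1/(β-1)) := by
      have h1' : (0:ℝ) < 1 + 1/(β-1) := by
        have : (0:ℝ) < 1/(β-1) := by
          apply div_pos one_pos; linarith
        linarith
      exact mul_pos (Real.rpow_pos_of_pos (by norm_num) _) h1'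
    refine ⟨(4:ℝ)^(-q) * (2:ℝ)^(-β), (2:ℝ)^(γ*q) * (1 + 1/(β-1)),
      mul_pos (Real.rpow_pos_of_pos (by norm_num) _) (Real.rpow_pos_of_pos (by norm_num) _),
      hCpos, ?_⟩
    intro z hz
    have hn : 1 ≤ ℓ z := by
      rcases Nat.eq_zero_or_pos (ℓ z) with hzz | hzz
      · exfalso
        apply hz
        have hmem : z ∈ {x | ℓ x = 0} := hzz
        rw [h0] at hmem
        exact hmem
      · exact hzz
    set n := ℓ z with hndef
    have hterm : ∀ k : ℕ, ((1 : ℝ) / ((Nat.card {x | ℓ x = n + k} : ℝ)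
        * (Nat.card {x | ℓ x = n + k + 1} : ℝ))) ^ q = t (n+k) := by
      intro k
      have hwnk : ((Nat.card {x | ℓ x = n + k} : ℝ)
          * (Nat.card {x | ℓ x = n + k + 1} : ℝ)) = w (n+k) := rfl
      rw [hwnk, one_div, htk]
      rw [Real.inv_rpow (hwpos _).le, ← Real.rpow_neg (hwpos _).le]
    simp only [hterm]
    have hE : -(2*γ-p+1)/(p-1) = 1 - β := by
      rw [hβdef, hqdef]; field_simp; ring
    rw [hE]
    have hgsum : Summable (fun k : ℕ => ((n + k : ℕ):ℝ) ^ (-β)) := AT_summable_shift hβ1 n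
    have htsum : Summable (fun k : ℕ => t (n+k)) := by
      refine Summable.of_nonneg_of_le (fun k => (htpos _).le) (fun k => ?_)
        (hgsum.mul_left ((2:ℝ)^(γ*q)))
      exact ht_up (n+k) (le_trans hn (Nat.le_add_right n k))
    constructor
    · have hlow := AT_series_lower hβ1 hn
      have h2' : ∑' k : ℕ, (4:ℝ)^(-q) * ((n+k:ℕ):ℝ)^(-β) ≤ ∑' k : ℕ, t (n+k) :=
        Summable.tsum_le_tsum (fun k => ht_lo (n+k) (le_trans hn (Nat.le_add_right n k)))
          (hgsum.mul_left _) htsum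
      rw [tsum_mul_left] at h2'
      calc (4:ℝ)^(-q) * (2:ℝ)^(-β) * (n:ℝ)^(1-β)
          = (4:ℝ)^(-q) * ((2:ℝ)^(-β) * (n:ℝ)^(1-β)) := by ring
        _ ≤ (4:ℝ)^(-q) * ∑' k : ℕ, ((n+k:ℕ):ℝ)^(-β) :=
            mul_le_mul_of_nonneg_left hlow (Real.rpow_pos_of_pos (by norm_num) _).le
        _ ≤ ∑' k : ℕ, t (n+k) := h2'
    · have hup := AT_series_upper hβ1 hn
      have h2' : ∑' k : ℕ, t (n+k) ≤ ∑' k : ℕ, (2:ℝ)^(γ*q) * ((n+k:ℕ):ℝ)^(-β) :=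
        Summable.tsum_le_tsum (fun k => ht_up (n+k) (le_trans hn (Nat.le_add_right n k)))
          htsum (hgsum.mul_left _)
      rw [tsum_mul_left] at h2'
      calc ∑' k : ℕ, t (n+k) ≤ (2:ℝ)^(γ*q) * ∑' k : ℕ, ((n+k:ℕ):ℝ)^(-β) := h2'
        _ ≤ (2:ℝ)^(γ*q) * ((1+1/(β-1)) * (n:ℝ)^(1-β)) :=
            mul_le_mul_of_nonneg_left hup (Real.rpow_pos_of_pos (by norm_num) _).le
        _ = (2:ℝ)^(γ*q) * (1+1/(β-1)) * (n:ℝ)^(1-β) := by ring
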